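/- Let G be a finite simple graph, S ⊆ V(G), δ > 0, and let 𝓗_S = (G∇(δ+1))_{≤|S|} be the set of shallow minors of G at depth δ+1 having at most |S| vertices. Let 𝒞₁,…,𝒞_t be pairwise disjoint nonempty sets of connected components of G − S such that: every component C in ⋃ᵢ 𝒞ᵢ has diameter at most δ (as an induced subgraph of G) and has at least one neighbor in S, and for all components C, C' ∈ ⋃ᵢ 𝒞ᵢ, C and C' lie in the same set 𝒞ⱼ if and only if N_S(C) = N_S(C'). Then t ≤ (clique-grad₀(𝓗_S) + 2∇₀(𝓗_S))·|S|. -/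

import Mathlib

/-- `H` is a shallow minor of `G` at depth `d`. -/
def IsShallowMinorAtDepth {V W : Type*} (G : SimpleGraph V) (d : ℕ)
    (H : SimpleGraph W) : Prop :=
  ∃ ψ : W → Set V,
    (∀ w, (ψ w).Nonempty) ∧
    (∀ w₁ w₂, w₁ ≠ w₂ → Disjoint (ψ w₁) (ψ w₂)) ∧
    (∀ w, ∃ c : ψ w, ∀ u : ψ w,
      ∃ p : (SimpleGraph.induce (ψ w) G).Walk c u, p.length ≤ d) ∧
    (∀ w₁ w₂, w₁ ≠ w₂ →
      (H.Adj w₁ w₂ ↔ ∃ v₁ ∈ ψ w₁, ∃ v₂ ∈ ψ w₂, G.Adj v₁ v₂))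

/-- `∇₀((G∇d)_{≤ℓ})`: the supremum of `|E(H)|/|V(H)|` over nonempty shallow minors of
`G` at depth `d` having at most `ℓ` vertices. -/
noncomputable def nabla0Minors {V : Type*} (G : SimpleGraph V) (d ℓ : ℕ) : ℝ :=
  sSup { q : ℝ | ∃ (n : ℕ) (H : SimpleGraph (Fin n)), 0 < n ∧ n ≤ ℓ ∧
    IsShallowMinorAtDepth G d H ∧ q = (H.edgeSet.ncard : ℝ) / (n : ℝ) }

/-- `#ω(H)`: the number of nonempty cliques of `H`. -/
noncomputable def numCliques {W : Type*} (H : SimpleGraph W) : ℕ :=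
  {s : Finset W | s.Nonempty ∧ H.IsClique (s : Set W)}.ncard

/-- `clique-grad₀((G∇d)_{≤ℓ})`: the supremum of `#ω(H)/|V(H)|` over nonempty shallow
minors of `G` at depth `d` having at most `ℓ` vertices. -/
noncomputable def cliqueGrad0Minors {V : Type*} (G : SimpleGraph V) (d ℓ : ℕ) : ℝ :=
  sSup { q : ℝ | ∃ (n : ℕ) (H : SimpleGraph (Fin n)), 0 < n ∧ n ≤ ℓ ∧
    IsShallowMinorAtDepth G d H ∧ q = (numCliques H : ℝ) / (n : ℝ) }

/-- `N_S(C)`: vertices of `S` having at least one neighbor in `C`. -/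
def nbrIn {V : Type*} (G : SimpleGraph V) (S C : Set V) : Set V :=
  {v ∈ S | ∃ u ∈ C, G.Adj v u}

/-- `C` is (the vertex set of) a connected component of `G − S`. -/
def IsCompOf {V : Type*} (G : SimpleGraph V) (S : Set V) (C : Set V) : Prop :=
  C ⊆ Sᶜ ∧ C.Nonempty ∧ (SimpleGraph.induce C G).Connected ∧
    ∀ v ∈ Sᶜ, v ∉ C → ∀ u ∈ C, ¬ G.Adj u v



section AuxFNCG

open SimpleGraph Set

/-- Base graph plus, for each `i`, a star centered at `a i` covering `X i`. -/
def starGraph {W : Type*} (G0 : SimpleGraph W) {t : ℕ} (X : Fin t → Set W) (a : Fin t → W) :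
    SimpleGraph W where
  Adj u v := u ≠ v ∧ (G0.Adj u v ∨ ∃ i, (a i = u ∧ v ∈ X i) ∨ (a i = v ∧ u ∈ X i))
  symm := ⟨by
    rintro u v ⟨h, h2⟩
    refine ⟨h.symm, ?_⟩
    rcases h2 with h2 | ⟨i, h2 | h2⟩
    · exact Or.inl h2.symm
    · exact Or.inr ⟨i, Or.inr h2⟩
    · exact Or.inr ⟨i, Or.inl h2⟩⟩
  loopless := ⟨fun u h => h.1 rfl⟩

lemma starGraph_snoc_mono {W : Type*} (G0 : SimpleGraph W) {t : ℕ} (X : Fin (t+1) → Set W)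
    (a' : Fin t → W) (z : W) :
    starGraph G0 (X ∘ Fin.castSucc) a' ≤ starGraph G0 X (Fin.snoc a' z) := by
  intro u v h
  obtain ⟨h1, h2⟩ := h
  refine ⟨h1, ?_⟩
  rcases h2 with h2 | ⟨i, h2⟩
  · exact Or.inl h2
  · refine Or.inr ⟨i.castSucc, ?_⟩
    simpa [Fin.snoc_castSucc] using h2

lemma starGraph_core {W : Type*} [Finite W] (G0 : SimpleGraph W) :
    ∀ (t : ℕ) (X : Fin t → Set W), (∀ i, (X i).Nonempty) → Function.Injective X →
    ∃ a : Fin t → W, (∀ i, a i ∈ X i) ∧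
      ∃ φ : Fin t → (Finset W ⊕ W × W), Function.Injective φ ∧
        (∀ i s, φ i = Sum.inl s → (s : Set W) = X i ∧
          (starGraph G0 X a).IsClique (X i)) ∧
        (∀ i p, φ i = Sum.inr p → (starGraph G0 X a).Adj p.1 p.2) := by
  intro t
  induction t with
  | zero =>
    intro X _ _
    exact ⟨Fin.elim0, fun i => i.elim0, Fin.elim0, fun i => i.elim0,
      fun i => i.elim0, fun i => i.elim0⟩
  | succ t ih =>
    intro X hne hinj
    obtain ⟨a', ha', φ', hφinj, hφcl, hφed⟩ := ih (X ∘ Fin.castSucc)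
      (fun i => hne _) (hinj.comp (Fin.castSucc_injective t))
    by_cases hc : ∃ s ∈ X (Fin.last t), ∃ x ∈ X (Fin.last t), s ≠ x ∧
        ¬ (starGraph G0 (X ∘ Fin.castSucc) a').Adj s x
    · obtain ⟨s, hs, x, hx, hsx, hnadj⟩ := hc
      have hmono := starGraph_snoc_mono G0 X a' s
      refine ⟨Fin.snoc a' s, ?_, Fin.snoc φ' (Sum.inr (s, x)), ?_, ?_, ?_⟩
      · intro i
        rcases Fin.eq_castSucc_or_eq_last i with ⟨j, rfl⟩ | rfl
        · simpa [Fin.snoc_castSucc] using ha' j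
        · simpa [Fin.snoc_last] using hs
      · intro i j hij
        rcases Fin.eq_castSucc_or_eq_last i with ⟨i', rfl⟩ | rfl <;>
          rcases Fin.eq_castSucc_or_eq_last j with ⟨j', rfl⟩ | rfl
        · simp only [Fin.snoc_castSucc] at hij
          exact congrArg _ (hφinj hij)
        · exfalso
          simp only [Fin.snoc_castSucc, Fin.snoc_last] at hij
          exact hnadj (hφed i' (s, x) hij)
        · exfalso
          simp only [Fin.snoc_castSucc, Fin.snoc_last] at hij
          exact hnadj (hφed j' (s, x) hij.symm)
        · rfl
      · intro i fs hif
        rcases Fin.eq_castSucc_or_eq_last i with ⟨i', rfl⟩ | rfl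
        · simp only [Fin.snoc_castSucc] at hif
          obtain ⟨h1, h2⟩ := hφcl i' fs hif
          exact ⟨h1, h2.mono hmono⟩
        · simp only [Fin.snoc_last] at hif
          exact absurd hif (by simp)
      · intro i p hip
        rcases Fin.eq_castSucc_or_eq_last i with ⟨i', rfl⟩ | rfl
        · simp only [Fin.snoc_castSucc] at hip
          exact hmono (hφed i' p hip)
        · simp only [Fin.snoc_last, Sum.inr.injEq] at hip
          subst hip
          exact ⟨hsx, Or.inr ⟨Fin.last t, Or.inl ⟨Fin.snoc_last _ _, hx⟩⟩⟩
    · push_neg at hc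
      obtain ⟨w, hw⟩ := hne (Fin.last t)
      have hmono := starGraph_snoc_mono G0 X a' w
      have hclq : (starGraph G0 X (Fin.snoc a' w)).IsClique (X (Fin.last t)) := by
        intro u hu v hv huv
        exact hmono (hc u hu v hv huv)
      refine ⟨Fin.snoc a' w, ?_, Fin.snoc φ' (Sum.inl (X (Fin.last t)).toFinite.toFinset),
        ?_, ?_, ?_⟩
      · intro i
        rcases Fin.eq_castSucc_or_eq_last i with ⟨j, rfl⟩ | rfl
        · simpa [Fin.snoc_castSucc] using ha' j
        · simpa [Fin.snoc_last] using hw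
      · intro i j hij
        rcases Fin.eq_castSucc_or_eq_last i with ⟨i', rfl⟩ | rfl <;>
          rcases Fin.eq_castSucc_or_eq_last j with ⟨j', rfl⟩ | rfl
        · simp only [Fin.snoc_castSucc] at hij
          exact congrArg _ (hφinj hij)
        · exfalso
          simp only [Fin.snoc_castSucc, Fin.snoc_last] at hij
          have h1 := (hφcl i' _ hij).1
          rw [Set.Finite.coe_toFinset] at h1
          exact Fin.ne_last_of_lt (Fin.castSucc_lt_last i') (hinj h1.symm)
        · exfalso
          simp only [Fin.snoc_castSucc, Fin.snoc_last] at hij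
          have h1 := (hφcl j' _ hij.symm).1
          rw [Set.Finite.coe_toFinset] at h1
          exact Fin.ne_last_of_lt (Fin.castSucc_lt_last j') (hinj h1.symm)
        · rfl
      · intro i fs hif
        rcases Fin.eq_castSucc_or_eq_last i with ⟨i', rfl⟩ | rfl
        · simp only [Fin.snoc_castSucc] at hif
          obtain ⟨h1, h2⟩ := hφcl i' fs hif
          exact ⟨h1, h2.mono hmono⟩
        · simp only [Fin.snoc_last, Sum.inl.injEq] at hif
          subst hif
          exact ⟨Set.Finite.coe_toFinset _, hclq⟩
      · intro i p hip
        rcases Fin.eq_castSucc_or_eq_last i with ⟨i', rfl⟩ | rfl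
        · simp only [Fin.snoc_castSucc] at hip
          exact hmono (hφed i' p hip)
        · exact absurd hip (by simp)

lemma count_from_inj {W : Type*} [Fintype W] (H : SimpleGraph W) {t : ℕ}
    (φ : Fin t → Finset W ⊕ W × W) (hinj : Function.Injective φ)
    (hcl : ∀ i s, φ i = Sum.inl s → s.Nonempty ∧ H.IsClique (s : Set W))
    (hed : ∀ i p, φ i = Sum.inr p → H.Adj p.1 p.2) :
    t ≤ numCliques H + 2 * H.edgeSet.ncard := by
  classical
  set K : Set (Finset W) := {s : Finset W | s.Nonempty ∧ H.IsClique (s : Set W)} with hK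
  set D : Set (W × W) := {p : W × W | H.Adj p.1 p.2} with hD
  set A : Set (Finset W ⊕ W × W) := Sum.inl '' K ∪ Sum.inr '' D with hA
  have hmem : ∀ i, φ i ∈ A := by
    intro i
    cases hφ : φ i with
    | inl s => exact Or.inl ⟨s, hcl i s hφ, rfl⟩
    | inr p => exact Or.inr ⟨p, hed i p hφ, rfl⟩
  have hinj' : Function.Injective (fun i : Fin t => (⟨φ i, hmem i⟩ : A)) := by
    intro i j hij
    exact hinj (congrArg Subtype.val hij)
  have h1 : t ≤ Nat.card A := by
    have h := Nat.card_le_card_of_injective _ hinj'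
    rwa [Nat.card_eq_fintype_card, Fintype.card_fin] at h
  have h2 : Nat.card A = A.ncard := Nat.card_coe_set_eq A
  have h3 : A.ncard ≤ K.ncard + D.ncard := by
    refine le_trans (Set.ncard_union_le _ _) ?_
    rw [Set.ncard_image_of_injective K Sum.inl_injective,
      Set.ncard_image_of_injective D Sum.inr_injective]
  have h4 : K.ncard = numCliques H := rfl
  have h5 : D.ncard = 2 * H.edgeSet.ncard := by
    have eqv : D ≃ H.Dart :=
      { toFun := fun p => ⟨p.1, p.2⟩
        invFun := fun d => ⟨d.toProd, d.adj⟩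
        left_inv := fun p => rfl
        right_inv := fun d => rfl }
    have : Nat.card D = Fintype.card H.Dart := by
      rw [Nat.card_congr eqv, Nat.card_eq_fintype_card]
    rw [← Nat.card_coe_set_eq, this, SimpleGraph.dart_card_eq_twice_card_edges]
    congr 1
    rw [Set.ncard_eq_toFinset_card', SimpleGraph.edgeFinset]
  omega

lemma IsCompOf.subset_of_mem {V : Type*} {G : SimpleGraph V} {S C C' : Set V}
    (h : IsCompOf G S C) (h' : IsCompOf G S C') {v : V} (hv : v ∈ C) (hv' : v ∈ C') :
    C ⊆ C' := by
  obtain ⟨hCS, -, hconn, -⟩ := h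
  obtain ⟨hC'S, -, -, hmax⟩ := h'
  intro u hu
  suffices hkey : ∀ (x y : ↥C) (p : (SimpleGraph.induce C G).Walk x y), ↑x ∈ C' → ↑y ∈ C' by
    obtain ⟨p⟩ := hconn.preconnected ⟨v, hv⟩ ⟨u, hu⟩
    exact hkey _ _ p hv'
  intro x y p
  induction p with
  | nil => exact id
  | @cons x m y hadj q ih =>
    intro hx
    apply ih
    by_contra hmid
    exact hmax ↑m (hCS m.2) hmid ↑x hx hadj

lemma isCompOf_disjoint {V : Type*} {G : SimpleGraph V} {S C C' : Set V}
    (h : IsCompOf G S C) (h' : IsCompOf G S C') (hne : C ≠ C') : Disjoint C C' := by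
  rw [Set.disjoint_left]
  intro v hv hv'
  exact hne (subset_antisymm (IsCompOf.subset_of_mem h h' hv hv')
    (IsCompOf.subset_of_mem h' h hv' hv))

lemma bddAbove_cliqueGradSet {V : Type*} (G : SimpleGraph V) (d ℓ : ℕ) :
    BddAbove { q : ℝ | ∃ (n : ℕ) (H : SimpleGraph (Fin n)), 0 < n ∧ n ≤ ℓ ∧
      IsShallowMinorAtDepth G d H ∧ q = (numCliques H : ℝ) / (n : ℝ) } := by
  refine ⟨(2 : ℝ) ^ ℓ, ?_⟩
  rintro q ⟨n, H, hn, hnl, -, rfl⟩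
  have h1 : numCliques H ≤ 2 ^ n := by
    have h := Set.ncard_le_ncard
      (Set.subset_univ {s : Finset (Fin n) | s.Nonempty ∧ H.IsClique (s : Set (Fin n))})
      Set.finite_univ
    rwa [Set.ncard_univ, Nat.card_eq_fintype_card, Fintype.card_finset, Fintype.card_fin] at h
  have h2 : ((numCliques H : ℝ)) / (n : ℝ) ≤ (numCliques H : ℝ) :=
    div_le_self (by positivity) (by exact_mod_cast hn)
  refine h2.trans ?_
  calc (numCliques H : ℝ) ≤ ((2 ^ n : ℕ) : ℝ) := by exact_mod_cast h1
    _ ≤ (2 : ℝ) ^ ℓ := by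
        rw [Nat.cast_pow]
        exact pow_le_pow_right₀ one_le_two hnl |>.trans_eq (by norm_num)

lemma bddAbove_nablaSet {V : Type*} (G : SimpleGraph V) (d ℓ : ℕ) :
    BddAbove { q : ℝ | ∃ (n : ℕ) (H : SimpleGraph (Fin n)), 0 < n ∧ n ≤ ℓ ∧
      IsShallowMinorAtDepth G d H ∧ q = (H.edgeSet.ncard : ℝ) / (n : ℝ) } := by
  classical
  refine ⟨(ℓ : ℝ) ^ 2, ?_⟩
  rintro q ⟨n, H, hn, hnl, -, rfl⟩
  have h1 : H.edgeSet.ncard ≤ n ^ 2 := by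
    have hef : H.edgeSet.ncard = H.edgeFinset.card := by
      rw [Set.ncard_eq_toFinset_card', SimpleGraph.edgeFinset]
    have h2 := SimpleGraph.card_edgeFinset_le_card_choose_two (G := H)
    have h3 : (Fintype.card (Fin n)).choose 2 ≤ n ^ 2 := by
      rw [Fintype.card_fin]
      exact Nat.choose_le_pow n 2
    omega
  have h2 : ((H.edgeSet.ncard : ℝ)) / (n : ℝ) ≤ (H.edgeSet.ncard : ℝ) :=
    div_le_self (by positivity) (by exact_mod_cast hn)
  refine h2.trans ?_
  calc (H.edgeSet.ncard : ℝ) ≤ ((n ^ 2 : ℕ) : ℝ) := by exact_mod_cast h1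
    _ ≤ (ℓ : ℝ) ^ 2 := by
        rw [Nat.cast_pow]
        gcongr

lemma le_cliqueGrad0Minors {V : Type*} (G : SimpleGraph V) (d ℓ n : ℕ)
    (H : SimpleGraph (Fin n)) (hn : 0 < n) (hnl : n ≤ ℓ)
    (hm : IsShallowMinorAtDepth G d H) :
    (numCliques H : ℝ) / (n : ℝ) ≤ cliqueGrad0Minors G d ℓ :=
  le_csSup (bddAbove_cliqueGradSet G d ℓ) ⟨n, H, hn, hnl, hm, rfl⟩

lemma le_nabla0Minors {V : Type*} (G : SimpleGraph V) (d ℓ n : ℕ)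
    (H : SimpleGraph (Fin n)) (hn : 0 < n) (hnl : n ≤ ℓ)
    (hm : IsShallowMinorAtDepth G d H) :
    (H.edgeSet.ncard : ℝ) / (n : ℝ) ≤ nabla0Minors G d ℓ :=
  le_csSup (bddAbove_nablaSet G d ℓ) ⟨n, H, hn, hnl, hm, rfl⟩


end AuxFNCG

/-- With `𝓗_S = (G∇(δ+1))_{≤|S|}`: if `𝒞₁,…,𝒞_t` are pairwise disjoint nonempty
classes of connected components of `G − S`, each component of diameter at most `δ`
with a neighbor in `S`, grouped exactly by their neighborhood in `S`, then
`t ≤ (clique-grad₀(𝓗_S) + 2∇₀(𝓗_S))·|S|`. -/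
theorem few_neighborhood_classes_general
    {V : Type*} [Fintype V] (G : SimpleGraph V)
    (S : Set V) (δ : ℕ) (hδ : 0 < δ) (t : ℕ) (𝒞 : Fin t → Set (Set V))
    (hne : ∀ i, (𝒞 i).Nonempty)
    (hdisj : ∀ i j, i ≠ j → Disjoint (𝒞 i) (𝒞 j))
    (hcomp : ∀ i, ∀ C ∈ 𝒞 i, IsCompOf G S C)
    (hdiam : ∀ i, ∀ C ∈ 𝒞 i, ∀ u v : C,
      ∃ p : (SimpleGraph.induce C G).Walk u v, p.length ≤ δ)
    (hnbr : ∀ i, ∀ C ∈ 𝒞 i, (nbrIn G S C).Nonempty)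
    (hgroup : ∀ i j, ∀ C ∈ 𝒞 i, ∀ C' ∈ 𝒞 j, (i = j ↔ nbrIn G S C = nbrIn G S C')) :
    (t : ℝ) ≤ (cliqueGrad0Minors G (δ + 1) S.ncard +
      2 * nabla0Minors G (δ + 1) S.ncard) * (S.ncard : ℝ) := by
  classical
  rcases Set.eq_empty_or_nonempty S with hS | hS
  · have ht : t = 0 := by
      by_contra h
      have hpos : 0 < t := Nat.pos_of_ne_zero h
      obtain ⟨C0, hC0⟩ := hne ⟨0, hpos⟩
      obtain ⟨v, hv⟩ := hnbr ⟨0, hpos⟩ C0 hC0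
      have : v ∈ S := hv.1
      rw [hS] at this
      exact this
    subst ht
    simp [hS]
  · have hSfin : S.Finite := S.toFinite
    set n := S.ncard with hn
    have hn0 : 0 < n := (Set.ncard_pos hSfin).mpr hS
    haveI : Fintype ↥S := hSfin.fintype
    have hcard : Fintype.card ↥S = n := by
      rw [hn, ← Nat.card_coe_set_eq, Nat.card_eq_fintype_card]
    set e : Fin n ≃ ↥S := (Fintype.equivFinOfCardEq hcard).symm with he
    set C : Fin t → Set V := fun i => (hne i).choose with hC
    have hCmem : ∀ i, C i ∈ 𝒞 i := fun i => (hne i).choose_spec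
    have hicomp : ∀ i, IsCompOf G S (C i) := fun i => hcomp i _ (hCmem i)
    set X : Fin t → Set V := fun i => nbrIn G S (C i) with hX
    have hXsub : ∀ i, X i ⊆ S := fun i v hv => hv.1
    have hXne : ∀ i, (X i).Nonempty := fun i => hnbr i _ (hCmem i)
    have hXinj : Function.Injective X := fun i j hij =>
      (hgroup i j _ (hCmem i) _ (hCmem j)).mpr hij
    have hCdisj : ∀ i j, i ≠ j → Disjoint (C i) (C j) := by
      intro i j hij
      refine isCompOf_disjoint (hicomp i) (hicomp j) ?_
      intro hCC
      exact (Set.disjoint_left.mp (hdisj i j hij)) (hCmem i) (hCC ▸ hCmem j)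
    have hCS : ∀ i, C i ⊆ Sᶜ := fun i => (hicomp i).1
    have hCnadj : ∀ i j, i ≠ j → ∀ u ∈ C i, ∀ w ∈ C j, ¬ G.Adj u w := by
      intro i j hij u hu w hw
      exact (hicomp i).2.2.2 w (hCS j hw) (Set.disjoint_right.mp (hCdisj i j hij) hw) u hu
    set G0 : SimpleGraph (Fin n) := SimpleGraph.comap (fun k => ((e k : ↥S) : V)) G with hG0
    set X' : Fin t → Set (Fin n) := fun i => {k | ((e k : ↥S) : V) ∈ X i} with hX'
    have hX'ne : ∀ i, (X' i).Nonempty := by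
      intro i
      obtain ⟨v, hv⟩ := hXne i
      refine ⟨e.symm ⟨v, hXsub i hv⟩, ?_⟩
      show ((e (e.symm ⟨v, hXsub i hv⟩) : ↥S) : V) ∈ X i
      rw [Equiv.apply_symm_apply]
      exact hv
    have hX'inj : Function.Injective X' := by
      intro i j hij
      apply hXinj
      ext v
      constructor
      · intro hv
        have hvS : v ∈ S := hXsub i hv
        have hk : e.symm ⟨v, hvS⟩ ∈ X' i := by
          show ((e (e.symm ⟨v, hvS⟩) : ↥S) : V) ∈ X i
          rw [Equiv.apply_symm_apply]; exact hv
        rw [hij] at hk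
        have h2 : ((e (e.symm ⟨v, hvS⟩) : ↥S) : V) ∈ X j := hk
        rwa [Equiv.apply_symm_apply] at h2
      · intro hv
        have hvS : v ∈ S := hXsub j hv
        have hk : e.symm ⟨v, hvS⟩ ∈ X' j := by
          show ((e (e.symm ⟨v, hvS⟩) : ↥S) : V) ∈ X j
          rw [Equiv.apply_symm_apply]; exact hv
        rw [← hij] at hk
        have h2 : ((e (e.symm ⟨v, hvS⟩) : ↥S) : V) ∈ X i := hk
        rwa [Equiv.apply_symm_apply] at h2
    obtain ⟨a, ha, φ, hφinj, hφcl, hφed⟩ := starGraph_core G0 t X' hX'ne hX'inj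
    set Hg := starGraph G0 X' a with hHg
    set ψ : Fin n → Set V :=
      fun k => insert ((e k : ↥S) : V) (⋃ (i : Fin t) (_ : a i = k), C i) with hψ
    have hψmem : ∀ k v, v ∈ ψ k ↔ v = ((e k : ↥S) : V) ∨ ∃ i, a i = k ∧ v ∈ C i := by
      intro k v
      simp only [hψ, Set.mem_insert_iff, Set.mem_iUnion]
      tauto
    have hCsubψ : ∀ i, C i ⊆ ψ (a i) := by
      intro i v hv
      exact (hψmem _ v).mpr (Or.inr ⟨i, rfl, hv⟩)
    have heS : ∀ k, ((e k : ↥S) : V) ∈ S := fun k => (e k).2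
    have hmain_adj : ∀ i k, a i = k → ∃ u ∈ C i, G.Adj ((e k : ↥S) : V) u := by
      intro i k hk
      have h := ha i
      rw [hk] at h
      exact h.2
    have hminor : IsShallowMinorAtDepth G (δ + 1) Hg := by
      refine ⟨ψ, ?_, ?_, ?_, ?_⟩
      · intro k; exact ⟨_, Set.mem_insert _ _⟩
      · intro k l hkl
        rw [Set.disjoint_left]
        intro v hvk hvl
        rcases (hψmem k v).mp hvk with rfl | ⟨i, hik, hvC⟩
        · rcases (hψmem l _).mp hvl with h | ⟨j, hjl, hvC'⟩
          · exact hkl (e.injective (Subtype.val_injective h))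
          · exact (hCS j hvC') (heS k)
        · rcases (hψmem l v).mp hvl with h | ⟨j, hjl, hvC'⟩
          · exact (hCS i hvC) (by rw [h]; exact heS l)
          · have hij : i ≠ j := fun hh => hkl (by rw [← hik, ← hjl, hh])
            exact Set.disjoint_left.mp (hCdisj i j hij) hvC hvC'
      · intro k
        refine ⟨⟨_, Set.mem_insert _ _⟩, ?_⟩
        rintro ⟨v, hv⟩
        rcases (hψmem k v).mp hv with hv1 | ⟨i, hik, hvC⟩
        · subst hv1
          exact ⟨SimpleGraph.Walk.nil, by simp⟩
        · obtain ⟨u₀, hu₀C, hadj⟩ := hmain_adj i k hik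
          obtain ⟨p, hp⟩ := hdiam i (C i) (hCmem i) ⟨u₀, hu₀C⟩ ⟨v, hvC⟩
          have hsub : C i ⊆ ψ k := hik ▸ hCsubψ i
          let f : (SimpleGraph.induce (C i) G) →g (SimpleGraph.induce (ψ k) G) :=
            ⟨fun x => ⟨x.1, hsub x.2⟩, fun {x y} h => h⟩
          have hadj' : (SimpleGraph.induce (ψ k) G).Adj
              ⟨((e k : ↥S) : V), Set.mem_insert _ _⟩ ⟨u₀, hsub hu₀C⟩ := hadj
          refine ⟨SimpleGraph.Walk.cons hadj' (p.map f), ?_⟩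
          rw [SimpleGraph.Walk.length_cons, SimpleGraph.Walk.length_map]
          omega
      · intro k l hkl
        constructor
        · intro hadj
          obtain ⟨-, h2⟩ := hadj
          rcases h2 with h2 | ⟨i, ⟨hik, hlX⟩ | ⟨hil, hkX⟩⟩
          · exact ⟨_, Set.mem_insert _ _, _, Set.mem_insert _ _, h2⟩
          · obtain ⟨u, hu, hadj2⟩ := hlX.2
            exact ⟨u, hik ▸ hCsubψ i hu, _, Set.mem_insert _ _, hadj2.symm⟩
          · obtain ⟨u, hu, hadj2⟩ := hkX.2
            exact ⟨_, Set.mem_insert _ _, u, hil ▸ hCsubψ i hu, hadj2⟩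
        · rintro ⟨v₁, hv₁, v₂, hv₂, hadj⟩
          refine ⟨hkl, ?_⟩
          rcases (hψmem k v₁).mp hv₁ with rfl | ⟨i, hik, hv₁C⟩ <;>
            rcases (hψmem l v₂).mp hv₂ with h | ⟨j, hjl, hv₂C⟩
          · exact Or.inl (show G.Adj ((e k : ↥S) : V) ((e l : ↥S) : V) by rw [← h]; exact hadj)
          · exact Or.inr ⟨j, Or.inr ⟨hjl, ⟨heS k, v₂, hv₂C, hadj⟩⟩⟩
          · exact Or.inr ⟨i, Or.inl ⟨hik, ⟨heS l, v₁, hv₁C, by rw [h] at hadj; exact hadj.symm⟩⟩⟩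
          · have hij : i ≠ j := fun hh => hkl (by rw [← hik, ← hjl, hh])
            exact absurd hadj (hCnadj i j hij v₁ hv₁C v₂ hv₂C)
    have hcount : t ≤ numCliques Hg + 2 * Hg.edgeSet.ncard := by
      refine count_from_inj Hg φ hφinj ?_ hφed
      intro i s hs
      obtain ⟨h1, h2⟩ := hφcl i s hs
      constructor
      · rw [← Finset.coe_nonempty, h1]; exact hX'ne i
      · rw [show ((s : Set (Fin n))) = X' i from h1]
        exact h2
    have hle1 := le_cliqueGrad0Minors G (δ + 1) n n Hg hn0 le_rfl hminor
    have hle2 := le_nabla0Minors G (δ + 1) n n Hg hn0 le_rfl hminor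
    have hnR : (0 : ℝ) < (n : ℝ) := by exact_mod_cast hn0
    have hstep : (t : ℝ) ≤ ((numCliques Hg : ℝ)) + 2 * (Hg.edgeSet.ncard : ℝ) := by
      exact_mod_cast hcount
    calc (t : ℝ) ≤ ((numCliques Hg : ℝ)) + 2 * (Hg.edgeSet.ncard : ℝ) := hstep
      _ = ((numCliques Hg : ℝ) / n) * n + 2 * (((Hg.edgeSet.ncard : ℝ) / n) * n) := by
          field_simp
      _ ≤ cliqueGrad0Minors G (δ + 1) n * n + 2 * (nabla0Minors G (δ + 1) n * n) := by
          gcongr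
      _ = (cliqueGrad0Minors G (δ + 1) n + 2 * nabla0Minors G (δ + 1) n) * n := by ring
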